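/- Let (Ω, F, μ) be a probability space and let X : [0,∞) → Ω → ℝ be a family of measurable functions such that for μ-almost every ω the map t ↦ X_t(ω) is nonnegative and nondecreasing. Suppose there exist constants C > 0 and γ > 0 such that ∫ X_{2^{n+1}}(ω) dμ ≤ C·(n+1)^γ for every natural number n. Then for μ-almost every ω, X_t(ω)/t → 0 as t → ∞. -/

import Mathlib

open MeasureTheory Filter

set_option maxHeartbeats 1000000 in
lemma aux_summable_stmt4 (γ : ℝ) :
    Summable (fun n : ℕ => ((n : ℝ) + 1) ^ γ * (2⁻¹ : ℝ) ^ n) := by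
  obtain ⟨m, hγm⟩ : ∃ m : ℕ, γ ≤ m := ⟨⌈γ⌉₊, Nat.le_ceil γ⟩
  have h1 : Summable (fun n : ℕ => (n : ℝ) ^ m * (2⁻¹ : ℝ) ^ n) :=
    summable_pow_mul_geometric_of_norm_lt_one m (by rw [norm_inv]; norm_num)
  have h2 : Summable (fun n : ℕ => ((n + 1 : ℕ) : ℝ) ^ m * (2⁻¹ : ℝ) ^ (n + 1)) :=
    (summable_nat_add_iff 1).2 h1
  have h3 : Summable (fun n : ℕ => 2 * (((n + 1 : ℕ) : ℝ) ^ m * (2⁻¹ : ℝ) ^ (n + 1))) :=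
    h2.mul_left 2
  refine h3.of_nonneg_of_le (fun n => ?_) (fun n => ?_)
  · positivity
  · have hb : (1 : ℝ) ≤ (n : ℝ) + 1 := by simp [Nat.cast_nonneg]
    have hle : ((n : ℝ) + 1) ^ γ ≤ ((n : ℝ) + 1) ^ (m : ℝ) :=
      Real.rpow_le_rpow_of_exponent_le hb hγm
    have heq : ((n : ℝ) + 1) ^ (m : ℝ) * (2⁻¹ : ℝ) ^ n
        = 2 * (((n + 1 : ℕ) : ℝ) ^ m * (2⁻¹ : ℝ) ^ (n + 1)) := by
      rw [Real.rpow_natCast]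
      simp only [Nat.cast_add, Nat.cast_one]
      ring
    rw [← heq]
    exact mul_le_mul_of_nonneg_right hle (by positivity)

set_option maxHeartbeats 1000000 in
/-- Measure-theoretic core of Lemma 2.8 of the paper: if `t ↦ X_t(ω)` is a.s. nonnegative and
nondecreasing (for `t ≥ 0`) and the dyadic expectations satisfy `E[X_{2^{n+1}}] ≤ C(n+1)^γ`,
then `X_t/t → 0` almost surely as `t → ∞`. -/
theorem stmt_4 {Ω : Type*} [MeasurableSpace Ω] (μ : Measure Ω) [IsProbabilityMeasure μ]
    (X : ℝ → Ω → ℝ) (hX : ∀ t, Measurable (X t))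
    (hmono : ∀ᵐ ω ∂μ, (∀ t, 0 ≤ t → 0 ≤ X t ω) ∧
      (∀ s t, 0 ≤ s → s ≤ t → X s ω ≤ X t ω))
    (C γ : ℝ) (hC : 0 < C) (hγ : 0 < γ)
    (hbound : ∀ n : ℕ,
      ∫⁻ ω, ENNReal.ofReal (X (2 ^ (n + 1)) ω) ∂μ ≤
        ENNReal.ofReal (C * ((n : ℝ) + 1) ^ γ)) :
    ∀ᵐ ω ∂μ, Tendsto (fun t => X t ω / t) atTop (nhds 0) := by
  -- Step 1: for every k, a.s. eventually `X (2^(n+1)) ω < 2^n / (k+1)`.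
  have key : ∀ k : ℕ, ∀ᵐ ω ∂μ, ∀ᶠ n in atTop,
      X (2 ^ (n + 1)) ω < ((k : ℝ) + 1)⁻¹ * 2 ^ n := by
    intro k
    have hδ : (0 : ℝ) < ((k : ℝ) + 1)⁻¹ := by positivity
    set δ : ℝ := ((k : ℝ) + 1)⁻¹ with hδdef
    set s : ℕ → Set Ω := fun n =>
      {ω | ENNReal.ofReal (δ * 2 ^ n) ≤ ENNReal.ofReal (X (2 ^ (n + 1)) ω)} with hs
    have hεpos : ∀ n : ℕ, (0 : ℝ) < δ * 2 ^ n := fun n => by positivity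
    have hmeas : ∀ n, μ (s n) ≤ ENNReal.ofReal ((C / δ) * (((n : ℝ) + 1) ^ γ * (2⁻¹) ^ n)) := by
      intro n
      have h1 : μ (s n) ≤ (∫⁻ ω, ENNReal.ofReal (X (2 ^ (n + 1)) ω) ∂μ) /
          ENNReal.ofReal (δ * 2 ^ n) :=
        meas_ge_le_lintegral_div ((hX _).ennreal_ofReal.aemeasurable)
          (ENNReal.ofReal_pos.2 (hεpos n)).ne' ENNReal.ofReal_ne_top
      refine h1.trans ?_
      have h2 : (∫⁻ ω, ENNReal.ofReal (X (2 ^ (n + 1)) ω) ∂μ) /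
          ENNReal.ofReal (δ * 2 ^ n) ≤
          ENNReal.ofReal (C * ((n : ℝ) + 1) ^ γ) / ENNReal.ofReal (δ * 2 ^ n) :=
        ENNReal.div_le_div_right (hbound n) _
      refine h2.trans (le_of_eq ?_)
      rw [← ENNReal.ofReal_div_of_pos (hεpos n)]
      congr 1
      field_simp
      rw [← mul_pow]
      norm_num
    have hsummable : Summable (fun n : ℕ => (C / δ) * (((n : ℝ) + 1) ^ γ * (2⁻¹ : ℝ) ^ n)) :=
      (aux_summable_stmt4 γ).mul_left _
    have hnn : ∀ n : ℕ, 0 ≤ (C / δ) * (((n : ℝ) + 1) ^ γ * (2⁻¹ : ℝ) ^ n) := by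
      intro n; positivity
    have hsum : (∑' n, μ (s n)) ≠ ⊤ := by
      have hle : (∑' n, μ (s n)) ≤
          ENNReal.ofReal (∑' n : ℕ, (C / δ) * (((n : ℝ) + 1) ^ γ * (2⁻¹) ^ n)) :=
        calc (∑' n, μ (s n))
          ≤ ∑' n : ℕ, ENNReal.ofReal ((C / δ) * (((n : ℝ) + 1) ^ γ * (2⁻¹) ^ n)) :=
            ENNReal.tsum_le_tsum hmeas
        _ = ENNReal.ofReal (∑' n : ℕ, (C / δ) * (((n : ℝ) + 1) ^ γ * (2⁻¹) ^ n)) :=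
            (ENNReal.ofReal_tsum_of_nonneg hnn hsummable).symm
      exact ne_top_of_le_ne_top ENNReal.ofReal_ne_top hle
    filter_upwards [MeasureTheory.ae_eventually_notMem hsum] with ω hω
    filter_upwards [hω] with n hn
    by_contra hcon
    push_neg at hcon
    exact hn (ENNReal.ofReal_le_ofReal hcon)
  rw [← ae_all_iff] at key
  filter_upwards [hmono, key] with ω hm hω
  obtain ⟨hnn, hmon⟩ := hm
  -- Step 2: deterministic conclusion.
  rw [Metric.tendsto_atTop]
  intro ε hε
  obtain ⟨k, hk⟩ := exists_nat_one_div_lt hε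
  obtain ⟨N, hN⟩ := (hω k).exists_forall_of_atTop
  refine ⟨2 ^ N, fun t ht => ?_⟩
  have h2N : (1 : ℝ) ≤ 2 ^ N := one_le_pow₀ (by norm_num)
  have ht1 : (1 : ℝ) ≤ t := h2N.trans ht
  have htpos : (0 : ℝ) < t := lt_of_lt_of_le one_pos ht1
  set n : ℕ := ⌊Real.logb 2 t⌋₊ with hn
  have hlogN : (N : ℝ) ≤ Real.logb 2 t := by
    rw [Real.le_logb_iff_rpow_le one_lt_two htpos, Real.rpow_natCast]
    exact ht
  have hNn : N ≤ n := Nat.le_floor hlogN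
  have hlog_nonneg : 0 ≤ Real.logb 2 t := le_trans (Nat.cast_nonneg N) hlogN
  have h2n_le : (2 : ℝ) ^ n ≤ t := by
    have h1 : (2 : ℝ) ^ (n : ℝ) ≤ (2 : ℝ) ^ Real.logb 2 t :=
      Real.rpow_le_rpow_of_exponent_le one_le_two (Nat.floor_le hlog_nonneg)
    rwa [Real.rpow_logb (by norm_num) (by norm_num) htpos, Real.rpow_natCast] at h1
  have ht_le : t ≤ (2 : ℝ) ^ (n + 1) := by
    have h1 : (2 : ℝ) ^ Real.logb 2 t ≤ (2 : ℝ) ^ ((n : ℝ) + 1) :=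
      Real.rpow_le_rpow_of_exponent_le one_le_two (Nat.lt_floor_add_one _).le
    rw [Real.rpow_logb (by norm_num) (by norm_num) htpos] at h1
    refine h1.trans (le_of_eq ?_)
    rw [← Real.rpow_natCast 2 (n + 1)]
    norm_num
  have h2npos : (0 : ℝ) < 2 ^ n := by positivity
  have hXt : X t ω ≤ X (2 ^ (n + 1)) ω := hmon t _ htpos.le ht_le
  have hX0 : 0 ≤ X t ω := hnn t htpos.le
  have hdiv : X t ω / t ≤ X (2 ^ (n + 1)) ω / 2 ^ n :=
    div_le_div₀ (hX0.trans hXt) hXt h2npos h2n_le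
  have hclose : X (2 ^ (n + 1)) ω / 2 ^ n < ((k : ℝ) + 1)⁻¹ := by
    rw [div_lt_iff₀ h2npos]
    exact hN n hNn
  have habs : X t ω / t < ε := by
    have hke : ((k : ℝ) + 1)⁻¹ < ε := by rwa [one_div] at hk
    exact lt_of_le_of_lt hdiv (hclose.trans hke)
  rw [Real.dist_eq, sub_zero, abs_of_nonneg (div_nonneg hX0 htpos.le)]
  exact habs
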